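/- In the 2-user interference network, binary power control achieves the optimal sum GDoF: for every topology α ∈ A_2 (2×2 matrix with nonnegative entries), D_{Σ,o}(α) = D_{Σ,b}(α). -/
import Mathlib


open Finset

/-- Positive part `(x)^+ = max(x,0)`. -/
noncomputable def pPart (x : ℝ) : ℝ := max x 0

/-- TIN GDoF of user `k` under topology `α` and power allocation `r`:
`d_k(α,r) = (α_kk + r_k - max_{j≠k} (α_kj + r_j)^+)^+` (max over the empty set is 0). -/
noncomputable def gdof {K : ℕ} (α : Fin K → Fin K → ℝ) (r : Fin K → ℝ) (k : Fin K) : ℝ :=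
  pPart (α k k + r k -
    ((Finset.univ.erase k).fold max 0 fun j => pPart (α k j + r j)))

/-- Sum GDoF under allocation `r`. -/
noncomputable def sumGdof {K : ℕ} (α : Fin K → Fin K → ℝ) (r : Fin K → ℝ) : ℝ :=
  ∑ k, gdof α r k

/-- Optimal-power-control sum GDoF: supremum over all allocations with `r_k ≤ 0`. -/
noncomputable def Dopt {K : ℕ} (α : Fin K → Fin K → ℝ) : ℝ :=
  sSup {x : ℝ | ∃ r : Fin K → ℝ, (∀ k, r k ≤ 0) ∧ x = sumGdof α r}

/-- Sum GDoF achieved by binary power control with active set `T`: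
`Σ_{k∈T} (α_kk - max_{j∈T, j≠k} α_kj)^+` (max over the empty set is 0). -/
noncomputable def binSum {K : ℕ} (α : Fin K → Fin K → ℝ) (T : Finset (Fin K)) : ℝ :=
  ∑ k ∈ T, pPart (α k k - ((T.erase k).fold max 0 fun j => α k j))

/-- Binary-power-control sum GDoF: maximum over all subsets of active users. -/
noncomputable def Dbin {K : ℕ} (α : Fin K → Fin K → ℝ) : ℝ :=
  (Finset.univ : Finset (Finset (Fin K))).sup' ⟨∅, Finset.mem_univ ∅⟩ (binSum α)

lemma pPart_nonneg (x : ℝ) : 0 ≤ pPart x := le_max_right _ _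
lemma le_pPart (x : ℝ) : x ≤ pPart x := le_max_left _ _
lemma pPart_of_nonpos {x : ℝ} (h : x ≤ 0) : pPart x = 0 := max_eq_right h
lemma pPart_of_nonneg {x : ℝ} (h : 0 ≤ x) : pPart x = x := max_eq_left h

lemma gdof_zero (α : Fin 2 → Fin 2 → ℝ) (r : Fin 2 → ℝ) :
    gdof α r 0 = pPart (α 0 0 + r 0 - pPart (α 0 1 + r 1)) := by
  have h : (Finset.univ.erase (0 : Fin 2)) = {1} := by decide
  rw [gdof, h, Finset.fold_singleton, max_eq_left (pPart_nonneg _)]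

lemma gdof_one (α : Fin 2 → Fin 2 → ℝ) (r : Fin 2 → ℝ) :
    gdof α r 1 = pPart (α 1 1 + r 1 - pPart (α 1 0 + r 0)) := by
  have h : (Finset.univ.erase (1 : Fin 2)) = {0} := by decide
  rw [gdof, h, Finset.fold_singleton, max_eq_left (pPart_nonneg _)]

lemma sumGdof_two (α : Fin 2 → Fin 2 → ℝ) (r : Fin 2 → ℝ) :
    sumGdof α r = pPart (α 0 0 + r 0 - pPart (α 0 1 + r 1))
      + pPart (α 1 1 + r 1 - pPart (α 1 0 + r 0)) := by
  rw [sumGdof, Fin.sum_univ_two, gdof_zero, gdof_one]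

lemma binSum_empty (α : Fin 2 → Fin 2 → ℝ) : binSum α ∅ = 0 := by
  simp [binSum]

lemma binSum_zero (α : Fin 2 → Fin 2 → ℝ) (hα : ∀ i j, 0 ≤ α i j) :
    binSum α {0} = α 0 0 := by
  rw [binSum, Finset.sum_singleton]
  have h : ({0} : Finset (Fin 2)).erase 0 = ∅ := by decide
  rw [h, Finset.fold_empty, sub_zero, pPart_of_nonneg (hα 0 0)]

lemma binSum_one (α : Fin 2 → Fin 2 → ℝ) (hα : ∀ i j, 0 ≤ α i j) :
    binSum α {1} = α 1 1 := by
  rw [binSum, Finset.sum_singleton]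
  have h : ({1} : Finset (Fin 2)).erase 1 = ∅ := by decide
  rw [h, Finset.fold_empty, sub_zero, pPart_of_nonneg (hα 1 1)]

lemma binSum_univ (α : Fin 2 → Fin 2 → ℝ) (hα : ∀ i j, 0 ≤ α i j) :
    binSum α Finset.univ = pPart (α 0 0 - α 0 1) + pPart (α 1 1 - α 1 0) := by
  rw [binSum, Fin.sum_univ_two]
  have h0 : ((Finset.univ : Finset (Fin 2)).erase 0) = {1} := by decide
  have h1 : ((Finset.univ : Finset (Fin 2)).erase 1) = {0} := by decide
  rw [h0, h1, Finset.fold_singleton, Finset.fold_singleton,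
    max_eq_left (hα 0 1), max_eq_left (hα 1 0)]

lemma binSum_le_Dbin (α : Fin 2 → Fin 2 → ℝ) (T : Finset (Fin 2)) :
    binSum α T ≤ Dbin α :=
  Finset.le_sup' _ (Finset.mem_univ T)

/-- in the 2-user interference network, binary power control achieves
the optimal sum GDoF: `D_{Σ,o}(α) = D_{Σ,b}(α)` for every nonnegative topology. -/
theorem stmt_4 (α : Fin 2 → Fin 2 → ℝ) (hα : ∀ i j, 0 ≤ α i j) :
    Dopt α = Dbin α := by
  set S := {x : ℝ | ∃ r : Fin 2 → ℝ, (∀ k, r k ≤ 0) ∧ x = sumGdof α r} with hS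
  have hub : ∀ x ∈ S, x ≤ Dbin α := by
    rintro x ⟨r, hr, rfl⟩
    rw [sumGdof_two]
    set A := α 0 0 + r 0 - pPart (α 0 1 + r 1) with hA
    set B := α 1 1 + r 1 - pPart (α 1 0 + r 0) with hB
    rcases le_or_gt A 0 with hA0 | hA0 <;> rcases le_or_gt B 0 with hB0 | hB0
    · rw [pPart_of_nonpos hA0, pPart_of_nonpos hB0]
      simpa using (binSum_empty α ▸ binSum_le_Dbin α ∅)
    · rw [pPart_of_nonpos hA0, pPart_of_nonneg hB0.le, zero_add]
      have : B ≤ α 1 1 := by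
        have := pPart_nonneg (α 1 0 + r 0)
        have := hr 1
        rw [hB]; linarith
      calc B ≤ α 1 1 := this
        _ = binSum α {1} := (binSum_one α hα).symm
        _ ≤ Dbin α := binSum_le_Dbin α _
    · rw [pPart_of_nonneg hA0.le, pPart_of_nonpos hB0, add_zero]
      have : A ≤ α 0 0 := by
        have := pPart_nonneg (α 0 1 + r 1)
        have := hr 0
        rw [hA]; linarith
      calc A ≤ α 0 0 := this
        _ = binSum α {0} := (binSum_zero α hα).symm
        _ ≤ Dbin α := binSum_le_Dbin α _
    · rw [pPart_of_nonneg hA0.le, pPart_of_nonneg hB0.le]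
      have h1 := le_pPart (α 0 1 + r 1)
      have h2 := le_pPart (α 1 0 + r 0)
      have : A + B ≤ (α 0 0 - α 0 1) + (α 1 1 - α 1 0) := by
        rw [hA, hB]; linarith
      calc A + B ≤ (α 0 0 - α 0 1) + (α 1 1 - α 1 0) := this
        _ ≤ pPart (α 0 0 - α 0 1) + pPart (α 1 1 - α 1 0) :=
            add_le_add (le_pPart _) (le_pPart _)
        _ = binSum α Finset.univ := (binSum_univ α hα).symm
        _ ≤ Dbin α := binSum_le_Dbin α _
  have hach : ∀ T : Finset (Fin 2), binSum α T ∈ S := by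
    intro T
    have key : ∀ T : Finset (Fin 2), ∃ r : Fin 2 → ℝ, (∀ k, r k ≤ 0) ∧
        binSum α T = sumGdof α r := by
      intro T
      have hcases : T = ∅ ∨ T = {0} ∨ T = {1} ∨ T = Finset.univ := by
        revert T; decide
      rcases hcases with rfl | rfl | rfl | rfl
      · -- ∅
        set M := max (α 0 0) (α 1 1) with hM
        have hM0 : 0 ≤ M := le_trans (hα 0 0) (le_max_left _ _)
        refine ⟨fun _ => -M, fun _ => neg_nonpos.mpr hM0, ?_⟩
        rw [binSum_empty, sumGdof_two]
        have e1 : pPart (α 0 0 + -M - pPart (α 0 1 + -M)) = 0 := by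
          apply pPart_of_nonpos
          have := pPart_nonneg (α 0 1 + -M)
          have : α 0 0 ≤ M := le_max_left _ _
          have := pPart_nonneg (α 0 1 + -M)
          linarith
        have e2 : pPart (α 1 1 + -M - pPart (α 1 0 + -M)) = 0 := by
          apply pPart_of_nonpos
          have : α 1 1 ≤ M := le_max_right _ _
          have := pPart_nonneg (α 1 0 + -M)
          linarith
        rw [e1, e2]; ring
      · -- {0}
        set M := max (α 0 1) (α 1 1) with hM
        have hM0 : 0 ≤ M := le_trans (hα 0 1) (le_max_left _ _)
        refine ⟨![0, -M], ?_, ?_⟩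
        · intro k; fin_cases k <;> simp [hM0]
        · rw [binSum_zero α hα, sumGdof_two]
          simp only [Matrix.cons_val_zero, Matrix.cons_val_one, Matrix.head_cons]
          have e1 : pPart (α 0 1 + -M) = 0 := by
            apply pPart_of_nonpos
            have : α 0 1 ≤ M := le_max_left _ _
            linarith
          have e2 : pPart (α 1 1 + -M - pPart (α 1 0 + 0)) = 0 := by
            apply pPart_of_nonpos
            have : α 1 1 ≤ M := le_max_right _ _
            have := pPart_nonneg (α 1 0 + 0)
            linarith
          rw [e1, e2]
          simp [pPart_of_nonneg (hα 0 0)]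
      · -- {1}
        set M := max (α 1 0) (α 0 0) with hM
        have hM0 : 0 ≤ M := le_trans (hα 1 0) (le_max_left _ _)
        refine ⟨![-M, 0], ?_, ?_⟩
        · intro k; fin_cases k <;> simp [hM0]
        · rw [binSum_one α hα, sumGdof_two]
          simp only [Matrix.cons_val_zero, Matrix.cons_val_one, Matrix.head_cons]
          have e1 : pPart (α 1 0 + -M) = 0 := by
            apply pPart_of_nonpos
            have : α 1 0 ≤ M := le_max_left _ _
            linarith
          have e2 : pPart (α 0 0 + -M - pPart (α 0 1 + 0)) = 0 := by
            apply pPart_of_nonpos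
            have : α 0 0 ≤ M := le_max_right _ _
            have := pPart_nonneg (α 0 1 + 0)
            linarith
          rw [e1, e2]
          simp [pPart_of_nonneg (hα 1 1)]
      · -- univ
        refine ⟨fun _ => 0, fun k => le_refl 0, ?_⟩
        rw [binSum_univ α hα, sumGdof_two]
        rw [pPart_of_nonneg (by linarith [hα 0 1] : (0:ℝ) ≤ α 0 1 + 0),
          pPart_of_nonneg (by linarith [hα 1 0] : (0:ℝ) ≤ α 1 0 + 0)]
        ring_nf
    obtain ⟨r, hr, hrs⟩ := key T
    exact ⟨r, hr, hrs⟩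
  have hmem : Dbin α ∈ S := by
    obtain ⟨T, -, hT⟩ := Finset.exists_mem_eq_sup' (⟨∅, Finset.mem_univ ∅⟩ :
      (Finset.univ : Finset (Finset (Fin 2))).Nonempty) (binSum α)
    rw [Dbin, hT]
    exact hach T
  exact IsGreatest.csSup_eq ⟨hmem, hub⟩
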